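/- There exist C > 0 and ε₀ > 0 such that for all ε ∈ (0, ε₀), all ξ ∈ [−ξ₁, ξ₂], and all θ ∈ [0,π] with θ ≤ √(ε·|ln ε|): |q_h(ξ,θ)| ≤ C. -/

import Mathlib

open Real

noncomputable section

/-- The distance parameter `a_ε`. -/
def aEps (r₁ r₂ ε : ℝ) : ℝ :=
  Real.sqrt ε * Real.sqrt ((2*r₁+ε)*(2*r₂+ε)*(2*r₁+2*r₂+ε)) / (2*(r₁+r₂+ε))

def xi (r : ℝ) (r₁ r₂ ε : ℝ) : ℝ := Real.arsinh (aEps r₁ r₂ ε / r)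

def sZero (r₁ r₂ ε : ℝ) : ℝ := xi r₁ r₁ r₂ ε + xi r₂ r₁ r₂ ε

/-- `w θ ξ = √(cosh ξ − cos θ)`. -/
def w (θ ξ : ℝ) : ℝ := Real.sqrt (Real.cosh ξ - Real.cos θ)

/-- The digamma value `ψ₀(z) = −γ + ∑_{k≥0} (z−1)/((k+1)(k+z))`. -/
def digammaVal (z : ℝ) : ℝ :=
  -Real.eulerMascheroniConstant + ∑' k : ℕ, (z - 1) / ((k + 1) * (k + z))

def rTilde (r₁ r₂ : ℝ) : ℝ := r₁ * r₂ / (r₁ + r₂)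

/-- `μ_j` for `j = 1, 2`. -/
def muConst (r₁ r₂ : ℝ) (j : ℕ) : ℝ :=
  (digammaVal ((if j = 1 then r₁ else r₂) / (r₁ + r₂)) + Real.eulerMascheroniConstant) /
    (digammaVal (r₁ / (r₁ + r₂)) + digammaVal (r₂ / (r₁ + r₂)) +
      2 * Real.eulerMascheroniConstant)

/-- `μ_ε`. -/
def muEps (r₁ r₂ ε : ℝ) : ℝ :=
  (1 / (2 * Real.pi * rTilde r₁ r₂)) *
    (|Real.log ε| + Real.log (rTilde r₁ r₂) + Real.log 2 -
      2 * (digammaVal (r₁ / (r₁ + r₂)) * digammaVal (r₂ / (r₁ + r₂)) -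
          Real.eulerMascheroniConstant ^ 2) /
        (digammaVal (r₁ / (r₁ + r₂)) + digammaVal (r₂ / (r₁ + r₂)) +
          2 * Real.eulerMascheroniConstant))⁻¹

/-- `𝓘₁(ξ,θ;c) = (1/(2 a_ε s₀)) · w_θ(ξ)³ / w_θ(ξ−c)`. -/
def I1 (r₁ r₂ ε ξ θ c : ℝ) : ℝ :=
  (1 / (2 * aEps r₁ r₂ ε * sZero r₁ r₂ ε)) * w θ ξ ^ 3 / w θ (ξ - c)

/-- The blow-up factor `q_h(ξ,θ)`. -/
def qh (r₁ r₂ ε ξ θ : ℝ) : ℝ :=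
  muEps r₁ r₂ ε * muConst r₁ r₂ 1 *
      (I1 r₁ r₂ ε (-ξ) θ (2 * xi r₁ r₁ r₂ ε) +
        I1 r₁ r₂ ε ξ θ (2 * xi r₁ r₁ r₂ ε + 2 * xi r₂ r₁ r₂ ε)) +
    muEps r₁ r₂ ε * muConst r₁ r₂ 2 *
      (I1 r₁ r₂ ε ξ θ (2 * xi r₂ r₁ r₂ ε) +
        I1 r₁ r₂ ε (-ξ) θ (2 * xi r₁ r₁ r₂ ε + 2 * xi r₂ r₁ r₂ ε))

lemma my_half_le_arsinh {x : ℝ} (h0 : 0 ≤ x) (h1 : x ≤ 1) : x / 2 ≤ Real.arsinh x := by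
  have hs : (1:ℝ) ≤ Real.sqrt (1 + x ^ 2) := by
    nlinarith [Real.sq_sqrt (by positivity : (0:ℝ) ≤ 1 + x^2),
      Real.sqrt_nonneg (1 + x^2)]
  have hlog : Real.log (1 + x) ≤ Real.arsinh x := by
    have h : Real.arsinh x = Real.log (x + Real.sqrt (1 + x ^ 2)) := rfl
    rw [h]
    exact Real.log_le_log (by linarith) (by linarith)
  have h2 : 1 - (1 + x)⁻¹ ≤ Real.log (1 + x) := Real.one_sub_inv_le_log_of_pos (by linarith)
  have h3 : x / 2 ≤ 1 - (1 + x)⁻¹ := by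
    have hx1 : (0:ℝ) < 1 + x := by linarith
    have h : (1:ℝ) - (1 + x)⁻¹ = x / (1 + x) := by field_simp; ring
    rw [h, div_le_div_iff₀ two_pos hx1]
    nlinarith
  linarith

lemma my_arsinh_le_self {x : ℝ} (h0 : 0 ≤ x) : Real.arsinh x ≤ x := by
  rcases eq_or_lt_of_le h0 with h | h
  · simp [← h]
  · have h1 : 0 < Real.arsinh x := Real.arsinh_pos_iff.mpr h
    have := Real.self_lt_sinh_iff.mpr h1
    rw [Real.sinh_arsinh] at this
    linarith

lemma my_cosh_sub_one_le {t : ℝ} (h0 : 0 ≤ t) (h1 : t ≤ 1) : Real.cosh t - 1 ≤ 5 * t ^ 2 := by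
  have hE3 : Real.exp t ≤ 3 :=
    le_trans (Real.exp_le_exp.mpr h1) (le_of_lt (lt_trans Real.exp_one_lt_d9 (by norm_num)))
  have hE1 : (1:ℝ) ≤ Real.exp t := Real.one_le_exp h0
  have hEinv : Real.exp (-t) * Real.exp t = 1 := by rw [← Real.exp_add]; simp
  have hge : (1:ℝ) - t ≤ Real.exp (-t) := by linarith [Real.add_one_le_exp (-t)]
  have hsub : Real.exp t - 1 ≤ t * Real.exp t := by nlinarith [Real.exp_pos t]
  have huv : Real.exp (t/2) * Real.exp (-(t/2)) = 1 := by rw [← Real.exp_add]; simp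
  have hu2 : Real.exp (t/2) * Real.exp (t/2) = Real.exp t := by
    rw [← Real.exp_add]; ring_nf
  have hv2 : Real.exp (-(t/2)) * Real.exp (-(t/2)) = Real.exp (-t) := by
    rw [← Real.exp_add]; ring_nf
  have hvle : Real.exp (-(t/2)) ≤ 1 := by
    rw [← Real.exp_zero]; exact Real.exp_le_exp.mpr (by linarith)
  have hdiff : Real.exp (t/2) - Real.exp (-(t/2)) = Real.exp (-(t/2)) * (Real.exp t - 1) := by
    rw [mul_sub, mul_one, ← Real.exp_add]; ring_nf
  have hd0 : 0 ≤ Real.exp (t/2) - Real.exp (-(t/2)) := by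
    rw [hdiff]; exact mul_nonneg (Real.exp_pos _).le (by linarith)
  have hd2 : Real.exp (t/2) - Real.exp (-(t/2)) ≤ 3 * t := by
    rw [hdiff]
    calc Real.exp (-(t/2)) * (Real.exp t - 1) ≤ 1 * (Real.exp t - 1) := by
          apply mul_le_mul_of_nonneg_right hvle (by linarith)
      _ = Real.exp t - 1 := one_mul _
      _ ≤ t * Real.exp t := hsub
      _ ≤ t * 3 := by apply mul_le_mul_of_nonneg_left hE3 h0
      _ = 3 * t := by ring
  have hcosh : Real.cosh t = (Real.exp t + Real.exp (-t)) / 2 := Real.cosh_eq t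
  nlinarith [sq_nonneg (Real.exp (t/2) - Real.exp (-(t/2)))]

lemma my_sqrt_one_add_sq {x : ℝ} (h : x ^ 2 ≤ 1) : 1 + x ^ 2 / 4 ≤ Real.sqrt (1 + x ^ 2) := by
  nlinarith [Real.sq_sqrt (by positivity : (0:ℝ) ≤ 1 + x ^ 2),
    Real.sqrt_nonneg (1 + x ^ 2), sq_nonneg x, sq_nonneg (Real.sqrt (1+x^2) - (1 + x^2/4))]

lemma my_prod3_mono {a b c a' b' c' : ℝ} (ha : 0 ≤ a) (hb : 0 ≤ b) (hc : 0 ≤ c)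
    (h1 : a ≤ a') (h2 : b ≤ b') (h3 : c ≤ c') : a*b*c ≤ a'*b'*c' := by
  have hab : a*b ≤ a'*b' := mul_le_mul h1 h2 hb (le_trans ha h1)
  exact mul_le_mul hab h3 hc (mul_nonneg (le_trans ha h1) (le_trans hb h2))

set_option maxHeartbeats 2000000 in
theorem stmt14 (r₁ r₂ : ℝ) (hr₁ : 0 < r₁) (hr₂ : 0 < r₂) :
    ∃ C > 0, ∃ ε₀ > 0, ∀ ε ∈ Set.Ioo 0 ε₀,
      ∀ ξ ∈ Set.Icc (-(xi r₁ r₁ r₂ ε)) (xi r₂ r₁ r₂ ε),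
        ∀ θ ∈ Set.Icc 0 Real.pi, θ ≤ Real.sqrt (ε * |Real.log ε|) →
          |qh r₁ r₂ ε ξ θ| ≤ C := by
  have hR : (0:ℝ) < r₁ + r₂ := by linarith
  set cA := Real.sqrt (8*r₁*r₂*(r₁+r₂)) / (2*(r₁+r₂+1)) with hcA_def
  set CA := Real.sqrt ((2*r₁+1)*(2*r₂+1)*(2*(r₁+r₂)+1)) / (2*(r₁+r₂)) with hCA_def
  have hcA : 0 < cA := by
    rw [hcA_def]; exact div_pos (Real.sqrt_pos.mpr (by positivity)) (by linarith)
  have hCA : 0 < CA := by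
    rw [hCA_def]; exact div_pos (Real.sqrt_pos.mpr (by positivity)) (by linarith)
  clear_value cA CA
  set CN := 5*(CA*(1/r₁+1/r₂))^2 + 1 with hCN_def
  have hCN : 0 < CN := by rw [hCN_def]; positivity
  set cD := min (cA^2/(4*r₁^2)) (min (cA^2/(4*r₂^2)) (2/Real.pi^2)) with hcD_def
  have hcD : 0 < cD := by
    rw [hcD_def]
    have := Real.pi_pos
    refine lt_min (by positivity) (lt_min (by positivity) (by positivity))
  clear_value CN cD
  set CR := Real.sqrt (CN/cD) with hCR_def
  have hCR : 0 < CR := by rw [hCR_def]; exact Real.sqrt_pos.mpr (by positivity)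
  clear_value CR
  set K := r₁*CN*CR/cA^2 with hK_def
  have hK : 0 < K := by rw [hK_def]; positivity
  clear_value K
  set D := 2 * (digammaVal (r₁ / (r₁ + r₂)) * digammaVal (r₂ / (r₁ + r₂)) -
      Real.eulerMascheroniConstant ^ 2) /
    (digammaVal (r₁ / (r₁ + r₂)) + digammaVal (r₂ / (r₁ + r₂)) +
      2 * Real.eulerMascheroniConstant) with hD_def
  set K0 := Real.log (rTilde r₁ r₂) + Real.log 2 - D with hK0_def
  have hrt : 0 < rTilde r₁ r₂ := by rw [rTilde]; positivity
  set c0 := 1/(2*Real.pi*rTilde r₁ r₂) with hc0_def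
  have hc0 : 0 < c0 := by
    rw [hc0_def]
    have := Real.pi_pos
    positivity
  set M := |muConst r₁ r₂ 1| + |muConst r₁ r₂ 2| with hM_def
  have hM0 : 0 ≤ M := by rw [hM_def]; positivity
  clear_value K0 c0 M
  refine ⟨8*M*c0*K + 1, by linarith [mul_nonneg (mul_nonneg hM0 hc0.le) hK.le], ?_⟩
  set rm := min r₁ r₂ with hrm_def
  have hrm : 0 < rm := lt_min hr₁ hr₂
  clear_value rm
  refine ⟨min (min 1 (Real.exp (-(2*|K0|+1))))
      (min ((rm/CA)^2) ((1/(CA*(1/r₁+1/r₂)))^2)),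
      lt_min (lt_min one_pos (Real.exp_pos _))
        (lt_min (pow_pos (div_pos hrm hCA) 2)
          (pow_pos (div_pos one_pos (by positivity)) 2)), ?_⟩
  rintro ε ⟨hε0, hεlt⟩ ξ ⟨hξl, hξr⟩ θ ⟨hθ0, hθπ⟩ hθε
  simp only [lt_min_iff] at hεlt
  obtain ⟨⟨hε1, hεe⟩, hεa, hεb⟩ := hεlt
  -- bounds on sqrt ε
  have hsε : 0 ≤ Real.sqrt ε := Real.sqrt_nonneg ε
  have hsa : CA * Real.sqrt ε ≤ rm := by
    have h1 : Real.sqrt ε ≤ rm / CA := by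
      have := Real.sqrt_le_sqrt hεa.le
      rwa [Real.sqrt_sq (by positivity)] at this
    calc CA * Real.sqrt ε ≤ CA * (rm/CA) := by gcongr
      _ = rm := by field_simp
  have hsb : CA * Real.sqrt ε * (1/r₁+1/r₂) ≤ 1 := by
    have h1 : Real.sqrt ε ≤ 1/(CA*(1/r₁+1/r₂)) := by
      have := Real.sqrt_le_sqrt hεb.le
      rwa [Real.sqrt_sq (by positivity)] at this
    have h2 : (0:ℝ) < CA*(1/r₁+1/r₂) := by positivity
    calc CA * Real.sqrt ε * (1/r₁+1/r₂) = Real.sqrt ε * (CA*(1/r₁+1/r₂)) := by ring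
      _ ≤ (1/(CA*(1/r₁+1/r₂))) * (CA*(1/r₁+1/r₂)) := by gcongr
      _ = 1 := by field_simp
  -- bounds on a
  set a := aEps r₁ r₂ ε with ha_def
  have ha_pos_defer : True := trivial
  have hA1 : cA * Real.sqrt ε ≤ a := by
    rw [ha_def, aEps]
    calc cA * Real.sqrt ε
        = Real.sqrt ε * Real.sqrt (8*r₁*r₂*(r₁+r₂)) / (2*(r₁+r₂+1)) := by
          rw [hcA_def]; ring
      _ ≤ Real.sqrt ε * Real.sqrt ((2*r₁+ε)*(2*r₂+ε)*(2*r₁+2*r₂+ε)) / (2*(r₁+r₂+ε)) := by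
          refine div_le_div₀ (by positivity)
            (mul_le_mul_of_nonneg_left (Real.sqrt_le_sqrt ?_) (Real.sqrt_nonneg ε))
            (by linarith) (by linarith)
          calc 8*r₁*r₂*(r₁+r₂) = (2*r₁)*(2*r₂)*(2*r₁+2*r₂) := by ring
            _ ≤ (2*r₁+ε)*(2*r₂+ε)*(2*r₁+2*r₂+ε) :=
              my_prod3_mono (by linarith) (by linarith) (by linarith)
                (by linarith) (by linarith) (by linarith)
  have hA2 : a ≤ CA * Real.sqrt ε := by
    rw [ha_def, aEps]
    calc Real.sqrt ε * Real.sqrt ((2*r₁+ε)*(2*r₂+ε)*(2*r₁+2*r₂+ε)) / (2*(r₁+r₂+ε))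
        ≤ Real.sqrt ε * Real.sqrt ((2*r₁+1)*(2*r₂+1)*(2*(r₁+r₂)+1)) / (2*(r₁+r₂)) := by
          refine div_le_div₀ (by positivity)
            (mul_le_mul_of_nonneg_left (Real.sqrt_le_sqrt ?_) (Real.sqrt_nonneg ε))
            (by linarith) (by linarith)
          exact my_prod3_mono (by linarith) (by linarith) (by linarith)
            (by linarith) (by linarith) (by linarith)
      _ = CA * Real.sqrt ε := by rw [hCA_def]; ring
  clear_value a
  have ha0 : 0 < a := lt_of_lt_of_le (mul_pos hcA (Real.sqrt_pos.mpr hε0)) hA1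
  have haa : cA^2*ε ≤ a^2 := by
    have hsq : (cA*Real.sqrt ε)^2 = cA^2*ε := by rw [mul_pow, Real.sq_sqrt hε0.le]
    rw [← hsq]
    exact pow_le_pow_left₀ (le_of_lt (mul_pos hcA (Real.sqrt_pos.mpr hε0))) hA1 2
  -- bounds on xi
  have har1 : a / r₁ ≤ 1 := by
    rw [div_le_one hr₁]
    calc a ≤ CA * Real.sqrt ε := hA2
      _ ≤ rm := hsa
      _ ≤ r₁ := by rw [hrm_def]; exact min_le_left _ _
  have har2 : a / r₂ ≤ 1 := by
    rw [div_le_one hr₂]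
    calc a ≤ CA * Real.sqrt ε := hA2
      _ ≤ rm := hsa
      _ ≤ r₂ := by rw [hrm_def]; exact min_le_right _ _
  set x1 := xi r₁ r₁ r₂ ε with hx1_def
  set x2 := xi r₂ r₁ r₂ ε with hx2_def
  have hx1eq : x1 = Real.arsinh (a/r₁) := by rw [hx1_def, xi, ← ha_def]
  have hx2eq : x2 = Real.arsinh (a/r₂) := by rw [hx2_def, xi, ← ha_def]
  have hs0eq' : sZero r₁ r₂ ε = x1 + x2 := by rw [sZero, ← hx1_def, ← hx2_def]
  clear_value x1 x2
  have hx1le : x1 ≤ a/r₁ := by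
    rw [hx1eq]; exact my_arsinh_le_self (div_nonneg ha0.le hr₁.le)
  have hx2le : x2 ≤ a/r₂ := by
    rw [hx2eq]; exact my_arsinh_le_self (div_nonneg ha0.le hr₂.le)
  have hx1ge : a/r₁/2 ≤ x1 := by
    rw [hx1eq]; exact my_half_le_arsinh (div_nonneg ha0.le hr₁.le) har1
  have hx1pos : 0 < x1 :=
    lt_of_lt_of_le (div_pos (div_pos ha0 hr₁) two_pos) hx1ge
  have hx2pos : 0 < x2 := by
    rw [hx2eq]; exact Real.arsinh_pos_iff.mpr (div_pos ha0 hr₂)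
  set s0 := sZero r₁ r₂ ε with hs0_def
  have hs0eq : s0 = x1 + x2 := hs0eq'
  clear_value s0
  have hs0pos : 0 < s0 := by rw [hs0eq]; linarith
  have hs0le' : s0 ≤ CA * Real.sqrt ε * (1/r₁+1/r₂) := by
    have e1 : a / r₁ ≤ CA*Real.sqrt ε / r₁ := (div_le_div_iff_of_pos_right hr₁).mpr hA2
    have e2 : a / r₂ ≤ CA*Real.sqrt ε / r₂ := (div_le_div_iff_of_pos_right hr₂).mpr hA2
    have e3 : CA*Real.sqrt ε/r₁ + CA*Real.sqrt ε/r₂ = CA*Real.sqrt ε*(1/r₁+1/r₂) := by ring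
    rw [hs0eq]; linarith
  have hs0le : s0 ≤ 1 := le_trans hs0le' hsb
  have h2as0 : cA^2*ε ≤ 2*a*s0*r₁ := by
    have hs0ge' : a ≤ 2*r₁*s0 := by
      have h1 : a/r₁ ≤ 2*x1 := by linarith [hx1ge]
      have h2 : a ≤ 2*x1*r₁ := (div_le_iff₀ hr₁).mp h1
      rw [hs0eq]
      have h3 : 0 ≤ r₁*x2 := mul_nonneg hr₁.le hx2pos.le
      linarith
    have h := mul_le_mul_of_nonneg_left hs0ge' ha0.le
    have h2 : a^2 = a*a := sq a
    linarith
  -- log bounds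
  set L := |Real.log ε| with hL_def
  have hL0 : 0 ≤ L := hL_def ▸ abs_nonneg _
  clear_value L
  have hlogε : Real.log ε < -(2*|K0|+1) := by
    have := Real.log_lt_log hε0 hεe
    rwa [Real.log_exp] at this
  have hL : 2*|K0|+1 < L := by
    rw [hL_def, abs_of_neg (by linarith [abs_nonneg K0] : Real.log ε < 0)]
    linarith
  have hθ2 : θ^2 ≤ ε*L := by
    have h1 : θ^2 ≤ Real.sqrt (ε*L)^2 := pow_le_pow_left₀ hθ0 hθε 2
    rwa [Real.sq_sqrt (mul_nonneg hε0.le hL0)] at h1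
  have hSle : ε + θ^2 ≤ ε*(1+L) := by
    have : ε*(1+L) = ε + ε*L := by ring
    linarith [hθ2]
  -- muEps bound
  have hT_eq : muEps r₁ r₂ ε = c0 * (|Real.log ε| + K0)⁻¹ := by
    rw [muEps, hc0_def, hK0_def, hD_def]
    congr 2
    ring
  have hmuT : (1+L)/2 ≤ |Real.log ε| + K0 := by
    have h1 : -|K0| ≤ K0 := neg_abs_le K0
    rw [← hL_def]
    linarith
  have hmu_pos : 0 < muEps r₁ r₂ ε := by
    rw [hT_eq]
    exact mul_pos hc0 (inv_pos.mpr (by linarith))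
  have hmu_le : muEps r₁ r₂ ε ≤ c0 * (2/(1+L)) := by
    rw [hT_eq]
    have h1 : ((1+L)/2)⁻¹ = 2/(1+L) := by rw [inv_div]
    have h2 : (|Real.log ε| + K0)⁻¹ ≤ ((1+L)/2)⁻¹ :=
      inv_anti₀ (by linarith) hmuT
    rw [h1] at h2
    exact mul_le_mul_of_nonneg_left h2 hc0.le
  -- the key bound for a single I1 term
  have key : ∀ y c rj, (rj = r₁ ∨ rj = r₂) → |y| ≤ s0 →
      Real.arsinh (a / rj) ≤ |y - c| → I1 r₁ r₂ ε y θ c ≤ K * (1+L) := by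
    intro y c rj hrj hy hz
    have hrjpos : 0 < rj := by rcases hrj with h | h <;> rw [h] <;> [exact hr₁; exact hr₂]
    have harj : a / rj ≤ 1 := by rcases hrj with h | h <;> rw [h] <;> [exact har1; exact har2]
    have hcD1 : cD ≤ cA^2/(4*rj^2) := by
      rcases hrj with h | h <;> rw [h, hcD_def]
      · exact min_le_left _ _
      · exact le_trans (min_le_right _ _) (min_le_left _ _)
    have hcD2 : cD ≤ 2/Real.pi^2 := by
      rw [hcD_def]; exact le_trans (min_le_right _ _) (min_le_right _ _)
    -- numerator bound
    have hy' := abs_le.mp hy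
    have hysq : y^2 ≤ s0^2 := sq_le_sq' (by linarith [hy'.1]) hy'.2
    have hcoshy : Real.cosh y - 1 ≤ 5 * s0^2 := by
      have h := my_cosh_sub_one_le (abs_nonneg y) (hy.trans hs0le)
      rw [Real.cosh_abs, sq_abs] at h
      linarith
    have hs0sq : s0^2 ≤ (CA*(1/r₁+1/r₂))^2 * ε := by
      have h := pow_le_pow_left₀ hs0pos.le hs0le' 2
      have h2 : (CA*Real.sqrt ε*(1/r₁+1/r₂))^2 = (CA*(1/r₁+1/r₂))^2 * ε := by
        rw [mul_pow, mul_pow, Real.sq_sqrt hε0.le]; ring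
      linarith
    have hNy : Real.cosh y - Real.cos θ ≤ CN * (ε + θ^2) := by
      have h1 : 1 - θ^2/2 ≤ Real.cos θ := Real.one_sub_sq_div_two_le_cos
      rw [hCN_def]
      have hB : (0:ℝ) ≤ 5*(CA*(1/r₁+1/r₂))^2 * θ^2 :=
        mul_nonneg (by positivity) (sq_nonneg θ)
      have hx : (5*(CA*(1/r₁+1/r₂))^2+1) * (ε+θ^2)
          = 5*((CA*(1/r₁+1/r₂))^2*ε) + 5*(CA*(1/r₁+1/r₂))^2*θ^2 + ε + θ^2 := by ring
      linarith [hε0.le, sq_nonneg θ]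
    -- denominator bound
    have hcoshz : Real.cosh (Real.arsinh (a/rj)) ≤ Real.cosh (y - c) := by
      apply Real.cosh_le_cosh.mpr
      rwa [abs_of_nonneg (Real.arsinh_nonneg_iff.mpr (div_nonneg ha0.le hrjpos.le))]
    have hca : Real.cosh (Real.arsinh (a/rj)) = Real.sqrt (1 + (a/rj)^2) :=
      Real.cosh_arsinh _
    have hsq2 : 1 + (a/rj)^2/4 ≤ Real.sqrt (1 + (a/rj)^2) := by
      apply my_sqrt_one_add_sq
      have h01 : (0:ℝ) ≤ a/rj := div_nonneg ha0.le hrjpos.le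
      calc (a/rj)^2 ≤ 1^2 := pow_le_pow_left₀ h01 harj 2
        _ = 1 := one_pow 2
    have haeps : cA^2*ε/(4*rj^2) ≤ (a/rj)^2/4 := by
      have h : (a/rj)^2/4 = a^2/(4*rj^2) := by field_simp
      rw [h]
      exact (div_le_div_iff_of_pos_right (by positivity : (0:ℝ) < 4*rj^2)).mpr haa
    have h3 : 1 + cA^2*ε/(4*rj^2) ≤ Real.cosh (y - c) := by
      rw [hca] at hcoshz
      linarith
    have hNz : cD * (ε + θ^2) ≤ Real.cosh (y - c) - Real.cos θ := by
      have h2 : Real.cos θ ≤ 1 - 2/Real.pi^2*θ^2 := by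
        have := Real.cos_le_one_sub_mul_cos_sq (x := θ) (by rw [abs_of_nonneg hθ0]; exact hθπ)
        linarith
      have hm1 : cD*ε ≤ cA^2*ε/(4*rj^2) := by
        calc cD*ε ≤ cA^2/(4*rj^2)*ε := mul_le_mul_of_nonneg_right hcD1 hε0.le
          _ = cA^2*ε/(4*rj^2) := by ring
      have hm2 : cD*θ^2 ≤ 2/Real.pi^2*θ^2 := mul_le_mul_of_nonneg_right hcD2 (sq_nonneg θ)
      have he : cD*(ε+θ^2) = cD*ε + cD*θ^2 := by ring
      linarith only [h2, h3, hm1, hm2, he]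
    -- w algebra
    have hwy0 : (0:ℝ) ≤ w θ y := Real.sqrt_nonneg _
    have hwz0 : (0:ℝ) ≤ w θ (y - c) := Real.sqrt_nonneg _
    have hwy : w θ y ≤ Real.sqrt (CN * (ε+θ^2)) := Real.sqrt_le_sqrt hNy
    have hwz : Real.sqrt (cD * (ε+θ^2)) ≤ w θ (y - c) := Real.sqrt_le_sqrt hNz
    have hS0 : (0:ℝ) < ε + θ^2 := by positivity
    have hw3 : w θ y ^ 3 ≤ (CN*(ε+θ^2)) * Real.sqrt (CN*(ε+θ^2)) := by
      calc w θ y ^ 3 ≤ Real.sqrt (CN*(ε+θ^2)) ^ 3 := pow_le_pow_left₀ hwy0 hwy 3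
        _ = (CN*(ε+θ^2)) * Real.sqrt (CN*(ε+θ^2)) := by
            rw [pow_succ, Real.sq_sqrt (mul_nonneg hCN.le hS0.le)]
    have hratio : Real.sqrt (CN*(ε+θ^2)) / Real.sqrt (cD*(ε+θ^2)) = CR := by
      rw [hCR_def, ← Real.sqrt_div (mul_nonneg hCN.le hS0.le)]
      congr 1
      rw [mul_div_mul_right _ _ (ne_of_gt hS0)]
    have hfrac : w θ y ^ 3 / w θ (y - c) ≤ CN*(ε+θ^2) * CR := by
      calc w θ y ^ 3 / w θ (y - c)
          ≤ ((CN*(ε+θ^2)) * Real.sqrt (CN*(ε+θ^2))) / Real.sqrt (cD*(ε+θ^2)) := by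
            apply div_le_div₀ (mul_nonneg hCN.le hS0.le |>.trans (le_abs_self _) |> fun _ => mul_nonneg (mul_nonneg hCN.le hS0.le) (Real.sqrt_nonneg _)) hw3
              (Real.sqrt_pos.mpr (mul_pos hcD hS0)) hwz
        _ = CN*(ε+θ^2) * (Real.sqrt (CN*(ε+θ^2)) / Real.sqrt (cD*(ε+θ^2))) := by ring
        _ = CN*(ε+θ^2) * CR := by rw [hratio]
    have hpref : 1/(2*a*s0) ≤ r₁/(cA^2*ε) := by
      rw [div_le_div_iff₀ (mul_pos (mul_pos two_pos ha0) hs0pos) (by positivity)]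
      linarith [h2as0]
    have hI : I1 r₁ r₂ ε y θ c ≤ r₁/(cA^2*ε) * (CN*(ε+θ^2)*CR) := by
      have hId : I1 r₁ r₂ ε y θ c = (1/(2*a*s0)) * (w θ y ^ 3 / w θ (y - c)) := by
        rw [I1, mul_div_assoc, ← ha_def, ← hs0_def]
      rw [hId]
      apply mul_le_mul hpref hfrac (div_nonneg (pow_nonneg hwy0 3) hwz0)
        (le_of_lt (div_pos hr₁ (mul_pos (pow_pos hcA 2) hε0)))
    calc I1 r₁ r₂ ε y θ c ≤ r₁/(cA^2*ε) * (CN*(ε+θ^2)*CR) := hI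
      _ ≤ r₁/(cA^2*ε) * (CN*(ε*(1+L))*CR) := by
          apply mul_le_mul_of_nonneg_left _
            (le_of_lt (div_pos hr₁ (mul_pos (pow_pos hcA 2) hε0)))
          apply mul_le_mul_of_nonneg_right _ hCR.le
          exact mul_le_mul_of_nonneg_left hSle hCN.le
      _ = K * (1+L) := by
          rw [hK_def]
          field_simp
  -- apply key to the four terms
  have habsξ : |ξ| ≤ s0 := by
    rw [abs_le, hs0eq]
    constructor <;> [linarith [hx2pos]; linarith [hx1pos]]
  have habsnξ : |(-ξ)| ≤ s0 := by rwa [abs_neg]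
  have hIa : I1 r₁ r₂ ε (-ξ) θ (2*x1) ≤ K*(1+L) := by
    apply key _ _ r₁ (Or.inl rfl) habsnξ
    rw [← hx1eq]
    refine le_abs.mpr (Or.inr ?_)
    linarith
  have hIb : I1 r₁ r₂ ε ξ θ (2*x1 + 2*x2) ≤ K*(1+L) := by
    apply key _ _ r₁ (Or.inl rfl) habsξ
    rw [← hx1eq]
    refine le_abs.mpr (Or.inr ?_)
    linarith [hx2pos.le]
  have hIc : I1 r₁ r₂ ε ξ θ (2*x2) ≤ K*(1+L) := by
    apply key _ _ r₂ (Or.inr rfl) habsξ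
    rw [← hx2eq]
    refine le_abs.mpr (Or.inr ?_)
    linarith
  have hId : I1 r₁ r₂ ε (-ξ) θ (2*x1 + 2*x2) ≤ K*(1+L) := by
    apply key _ _ r₂ (Or.inr rfl) habsnξ
    rw [← hx2eq]
    refine le_abs.mpr (Or.inr ?_)
    linarith [hx1pos.le]
  have Inn : ∀ y c : ℝ, 0 ≤ I1 r₁ r₂ ε y θ c := by
    intro y c
    rw [I1, ← ha_def, ← hs0_def]
    apply div_nonneg _ (Real.sqrt_nonneg _)
    apply mul_nonneg _ (pow_nonneg (Real.sqrt_nonneg _) 3)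
    apply le_of_lt
    exact div_pos one_pos (mul_pos (mul_pos two_pos ha0) hs0pos)
  -- assemble
  have hsum1nn : 0 ≤ I1 r₁ r₂ ε (-ξ) θ (2*x1) + I1 r₁ r₂ ε ξ θ (2*x1 + 2*x2) :=
    add_nonneg (Inn _ _) (Inn _ _)
  have hsum2nn : 0 ≤ I1 r₁ r₂ ε ξ θ (2*x2) + I1 r₁ r₂ ε (-ξ) θ (2*x1 + 2*x2) :=
    add_nonneg (Inn _ _) (Inn _ _)
  have hone : (0:ℝ) < 1 + L := by linarith
  have hkey2 : (c0 * (2/(1+L))) * (2*(K*(1+L))) = 4*c0*K := by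
    field_simp
    ring
  have hμsum1 : muEps r₁ r₂ ε * (I1 r₁ r₂ ε (-ξ) θ (2*x1) +
      I1 r₁ r₂ ε ξ θ (2*x1 + 2*x2)) ≤ 4*c0*K := by
    calc muEps r₁ r₂ ε * (I1 r₁ r₂ ε (-ξ) θ (2*x1) + I1 r₁ r₂ ε ξ θ (2*x1 + 2*x2))
        ≤ (c0 * (2/(1+L))) * (2*(K*(1+L))) :=
          mul_le_mul hmu_le (by linarith) hsum1nn
            (le_of_lt (mul_pos hc0 (div_pos two_pos hone)))
      _ = 4*c0*K := hkey2
  have hμsum2 : muEps r₁ r₂ ε * (I1 r₁ r₂ ε ξ θ (2*x2) +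
      I1 r₁ r₂ ε (-ξ) θ (2*x1 + 2*x2)) ≤ 4*c0*K := by
    calc muEps r₁ r₂ ε * (I1 r₁ r₂ ε ξ θ (2*x2) + I1 r₁ r₂ ε (-ξ) θ (2*x1 + 2*x2))
        ≤ (c0 * (2/(1+L))) * (2*(K*(1+L))) :=
          mul_le_mul hmu_le (by linarith) hsum2nn
            (le_of_lt (mul_pos hc0 (div_pos two_pos hone)))
      _ = 4*c0*K := hkey2
  rw [qh, ← hx1_def, ← hx2_def]
  calc |muEps r₁ r₂ ε * muConst r₁ r₂ 1 *
        (I1 r₁ r₂ ε (-ξ) θ (2*x1) + I1 r₁ r₂ ε ξ θ (2*x1 + 2*x2)) +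
      muEps r₁ r₂ ε * muConst r₁ r₂ 2 *
        (I1 r₁ r₂ ε ξ θ (2*x2) + I1 r₁ r₂ ε (-ξ) θ (2*x1 + 2*x2))|
      ≤ |muEps r₁ r₂ ε * muConst r₁ r₂ 1 *
          (I1 r₁ r₂ ε (-ξ) θ (2*x1) + I1 r₁ r₂ ε ξ θ (2*x1 + 2*x2))| +
        |muEps r₁ r₂ ε * muConst r₁ r₂ 2 *
          (I1 r₁ r₂ ε ξ θ (2*x2) + I1 r₁ r₂ ε (-ξ) θ (2*x1 + 2*x2))| := abs_add_le _ _
    _ = |muConst r₁ r₂ 1| * (muEps r₁ r₂ ε *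
          (I1 r₁ r₂ ε (-ξ) θ (2*x1) + I1 r₁ r₂ ε ξ θ (2*x1 + 2*x2))) +
        |muConst r₁ r₂ 2| * (muEps r₁ r₂ ε *
          (I1 r₁ r₂ ε ξ θ (2*x2) + I1 r₁ r₂ ε (-ξ) θ (2*x1 + 2*x2))) := by
        rw [abs_mul, abs_mul, abs_mul, abs_mul, abs_of_nonneg hmu_pos.le,
          abs_of_nonneg hsum1nn, abs_of_nonneg hsum2nn]
        ring
    _ ≤ |muConst r₁ r₂ 1| * (4*c0*K) + |muConst r₁ r₂ 2| * (4*c0*K) :=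
        add_le_add (mul_le_mul_of_nonneg_left hμsum1 (abs_nonneg _))
          (mul_le_mul_of_nonneg_left hμsum2 (abs_nonneg _))
    _ ≤ 8*M*c0*K + 1 := by
        rw [hM_def]
        linarith [mul_nonneg (abs_nonneg (muConst r₁ r₂ 1)) (mul_nonneg hc0.le hK.le),
          mul_nonneg (abs_nonneg (muConst r₁ r₂ 2)) (mul_nonneg hc0.le hK.le)]

end
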